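/- For pairwise distinct points A, B, C on an elliptic curve E over K, Γ(-A,-B,-C) = -Γ(A,B,C) - a₁, and Γ is invariant under simultaneous translation: Γ(A+P, B+P, C+P) = Γ(A,B,C) for any point P. -/

import Mathlib

noncomputable section
namespace EllipticPeriods

variable {F : Type*} [Field F]

/-- x-coordinate of an affine point, with junk value 0 at the point at infinity. -/
def xc {W : WeierstrassCurve.Affine F} : W.Point → F
  | .zero => 0
  | @WeierstrassCurve.Affine.Point.some _ _ _ x _ _ => x

/-- y-coordinate of an affine point, with junk value 0 at the point at infinity. -/
def yc {W : WeierstrassCurve.Affine F} : W.Point → F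
  | .zero => 0
  | @WeierstrassCurve.Affine.Point.some _ _ _ _ y _ => y

open scoped Classical in
/-- The function `u_{A,B} = (y_A - y(A-B))/(x_A - x(A-B))`, evaluated at `P`: this is the
slope of the line (secant, or tangent in the degenerate case) through the points
`P - A` and `A - B` of the curve. -/
def uf (W : WeierstrassCurve.Affine F) (A B P : W.Point) : F :=
  W.slope (xc (P - A)) (xc (A - B)) (yc (P - A)) (yc (A - B))

/-- `Γ(A,B,C) = u_{A,B}(C)`. -/
def Gam (W : WeierstrassCurve.Affine F) (A B C : W.Point) : F := uf W A B C

open scoped Classical in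
open WeierstrassCurve.Affine in
lemma slope_neg_aux {W : WeierstrassCurve.Affine F} {x₁ x₂ y₁ y₂ : F}
    (h₁ : W.Equation x₁ y₁) (h₂ : W.Equation x₂ y₂)
    (hne : ¬(x₁ = x₂ ∧ y₁ = W.negY x₂ y₂)) :
    W.slope x₁ x₂ (W.negY x₁ y₁) (W.negY x₂ y₂) = -W.slope x₁ x₂ y₁ y₂ - W.a₁ := by
  by_cases hx : x₁ = x₂
  · have hy : y₁ ≠ W.negY x₂ y₂ := fun h => hne ⟨hx, h⟩
    have hyy : y₁ = y₂ := Y_eq_of_Y_ne h₁ h₂ hx hy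
    subst hx; subst hyy
    have hy' : W.negY x₁ y₁ ≠ W.negY x₁ (W.negY x₁ y₁) := by
      rw [W.negY_negY]
      exact hy.symm
    rw [slope_of_Y_ne rfl hy', slope_of_Y_ne rfl hy, W.negY_negY]
    have hD : y₁ - W.negY x₁ y₁ ≠ 0 := sub_ne_zero.mpr hy
    have hD' : W.negY x₁ y₁ - y₁ ≠ 0 := fun h => hD (by linear_combination -h)
    simp only [negY] at *
    have hE : x₁ * W.a₁ + y₁ * 2 + W.a₃ ≠ 0 := fun h => hD (by linear_combination h)
    have hE' : -(x₁ * W.a₁) - y₁ * 2 - W.a₃ ≠ 0 := fun h => hD (by linear_combination -h)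
    field_simp
    ring_nf
    rw [show -(x₁ * W.a₁) - y₁ * 2 - W.a₃ = -(x₁ * W.a₁ + y₁ * 2 + W.a₃) by ring, inv_neg]
    field_simp
    ring
  · rw [slope_of_X_ne hx, slope_of_X_ne hx]
    have h : x₁ - x₂ ≠ 0 := sub_ne_zero.mpr hx
    simp only [WeierstrassCurve.Affine.negY]
    field_simp
    ring

open scoped Classical in
open WeierstrassCurve.Affine in
lemma slope_neg_pt (W : WeierstrassCurve.Affine F) (P₁ P₂ : W.Point)
    (h₁ : P₁ ≠ 0) (h₂ : P₂ ≠ 0) (h₃ : P₁ ≠ -P₂) :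
    W.slope (xc (-P₁)) (xc (-P₂)) (yc (-P₁)) (yc (-P₂)) =
      -W.slope (xc P₁) (xc P₂) (yc P₁) (yc P₂) - W.a₁ := by
  cases P₁ with
  | zero => exact absurd rfl h₁
  | @some x₁ y₁ hh₁ =>
    cases P₂ with
    | zero => exact absurd rfl h₂
    | @some x₂ y₂ hh₂ =>
      rw [Point.neg_some, Point.neg_some] at *
      have hne : ¬(x₁ = x₂ ∧ y₁ = W.negY x₂ y₂) := by
        rintro ⟨rfl, rfl⟩
        exact h₃ rfl
      simp only [xc, yc]
      exact slope_neg_aux hh₁.1 hh₂.1 hne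

open scoped Classical in
/-- `Γ(-A,-B,-C) = -Γ(A,B,C) - a₁`, and `Γ` is invariant under simultaneous
translation of its three arguments. -/
theorem Gamma_neg_and_translate {F : Type*} [Field F] (W : WeierstrassCurve.Affine F)
    (A B C : W.Point) (hAB : A ≠ B) (hBC : B ≠ C) (hAC : A ≠ C) :
    Gam W (-A) (-B) (-C) = -Gam W A B C - W.a₁ ∧
      ∀ P : W.Point, Gam W (A + P) (B + P) (C + P) = Gam W A B C := by
  constructor
  · have e1 : -C - -A = -(C - A) := by abel
    have e2 : -A - -B = -(A - B) := by abel
    have hP₁ : C - A ≠ 0 := sub_ne_zero.mpr hAC.symm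
    have hP₂ : A - B ≠ 0 := sub_ne_zero.mpr hAB
    have h₃ : C - A ≠ -(A - B) := by
      rw [neg_sub]
      intro h
      exact hBC (sub_left_inj.mp h).symm
    unfold Gam uf
    rw [e1, e2]
    exact slope_neg_pt W (C - A) (A - B) hP₁ hP₂ h₃
  · intro P
    unfold Gam uf
    rw [add_sub_add_right_eq_sub, add_sub_add_right_eq_sub]

end EllipticPeriods
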